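/- For every integer $p \ge 0$, the identity $[p]! \sum_{k+m=p,\ k,m\ge 0} \dfrac{v^{-2km+2m}}{[2k]^{!!}\,[2m]^{!!}} = v^{p(3-p)/2}$ holds in $\mathbb{Q}(v)$. -/

import Mathlib

noncomputable section

abbrev K : Type := RatFunc ℚ

/-- The indeterminate `v` in `ℚ(v)`. -/
def v : K := RatFunc.X

/-- Quantum integer `[m] = (v^m - v^{-m})/(v - v^{-1})`. -/
def qint (m : ℤ) : K := (v ^ m - v ^ (-m)) / (v - v⁻¹)

/-- Quantum factorial `[r]! = ∏_{i=1}^r [i]`. -/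
def qfact (r : ℕ) : K := ∏ i ∈ Finset.range r, qint ((i : ℤ) + 1)

/-- Quantum double factorial `[2r]!! = ∏_{i=1}^r [2i]`. -/
def qdfact (r : ℕ) : K := ∏ i ∈ Finset.range r, qint (2 * ((i : ℤ) + 1))

/-- Balanced Gaussian binomial coefficient `[m][m-1]⋯[m-r+1]/[r]!`. -/
def qbinom (m : ℤ) (r : ℕ) : K := (∏ i ∈ Finset.range r, qint (m - (i : ℤ))) / qfact r

/-- Gaussian binomial with integer lower index, vanishing for negative lower index. -/
def qbinomZ (m r : ℤ) : K := if 0 ≤ r then qbinom m r.toNat else 0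

/-! ### Auxiliary lemmas -/

lemma v_ne_zero : v ≠ 0 := RatFunc.X_ne_zero

lemma v_pow_ne_one {d : ℕ} (hd : d ≠ 0) : v ^ d ≠ 1 := by
  intro h
  have h2 : (algebraMap (Polynomial ℚ) K) (Polynomial.X ^ d) =
      (algebraMap (Polynomial ℚ) K) 1 := by
    rw [map_pow, map_one, RatFunc.algebraMap_X]; exact h
  have h3 := RatFunc.algebraMap_injective ℚ h2
  have h4 := congrArg Polynomial.natDegree h3
  simp [Polynomial.natDegree_X_pow] at h4
  exact hd h4

lemma v_zpow_ne_one {n : ℤ} (hn : n ≠ 0) : v ^ n ≠ 1 := by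
  intro h
  rcases lt_or_gt_of_ne hn with h1 | h1
  · have : v ^ (-n) = 1 := by
      rw [zpow_neg, h, inv_one]
    rw [show (-n) = ((-n).toNat : ℤ) by omega, zpow_natCast] at this
    exact v_pow_ne_one (by omega) this
  · rw [show n = (n.toNat : ℤ) by omega, zpow_natCast] at h
    exact v_pow_ne_one (by omega) h

lemma v_zpow_ne {a b : ℤ} (h : a ≠ b) : v ^ a ≠ v ^ b := by
  intro he
  have : v ^ (a - b) = 1 := by
    rw [zpow_sub₀ v_ne_zero, he, div_self (zpow_ne_zero _ v_ne_zero)]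
  exact v_zpow_ne_one (by omega) this

lemma vpow_congr {a b : ℤ} (h : a = b) : v ^ a = v ^ b := by rw [h]

lemma v_sub_inv_ne : v - v⁻¹ ≠ 0 := by
  have : v ^ (1:ℤ) ≠ v ^ (-1:ℤ) := v_zpow_ne (by omega)
  simpa [zpow_one, zpow_neg, sub_ne_zero] using sub_ne_zero.mpr this

lemma qint_ne_zero {n : ℤ} (hn : n ≠ 0) : qint n ≠ 0 :=
  div_ne_zero (sub_ne_zero.mpr (v_zpow_ne (by omega))) v_sub_inv_ne

lemma qint_zero : qint 0 = 0 := by simp [qint]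

lemma qdfact_ne_zero (k : ℕ) : qdfact k ≠ 0 := by
  refine Finset.prod_ne_zero_iff.mpr fun i _ => qint_ne_zero (by omega)

lemma qfact_ne_zero (k : ℕ) : qfact k ≠ 0 := by
  refine Finset.prod_ne_zero_iff.mpr fun i _ => qint_ne_zero (by omega)

lemma qdfact_succ (n : ℕ) : qdfact (n + 1) = qdfact n * qint (2 * ((n : ℤ) + 1)) :=
  Finset.prod_range_succ _ _

lemma qint_add (a b : ℤ) : qint (a + b) = v ^ a * qint b + v ^ (-b) * qint a := by
  unfold qint
  rw [← mul_div_assoc, ← mul_div_assoc, ← add_div]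
  congr 1
  rw [neg_add, zpow_add₀ v_ne_zero, zpow_add₀ v_ne_zero]
  ring

lemma qint_double (n : ℤ) : qint (2 * n) = (v ^ n + v ^ (-n)) * qint n := by
  unfold qint
  rw [← mul_div_assoc]
  congr 1
  rw [two_mul, neg_add, zpow_add₀ v_ne_zero, zpow_add₀ v_ne_zero]
  ring

lemma v_pow_add_ne {n : ℤ} (hn : 0 < n) : v ^ n + v ^ (-n) ≠ 0 := by
  intro h
  have h2 : v ^ (2 * n) = -1 := by
    have := congrArg (· * v ^ n) h
    simp only [add_mul, zero_mul] at this
    rw [← zpow_add₀ v_ne_zero, ← zpow_add₀ v_ne_zero] at this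
    simp only [neg_add_cancel, zpow_zero] at this
    rw [two_mul]
    linear_combination this
  rw [show (2 * n) = ((2 * n).toNat : ℤ) by omega, zpow_natCast] at h2
  have h3 : (algebraMap (Polynomial ℚ) K) (Polynomial.X ^ (2*n).toNat) =
      (algebraMap (Polynomial ℚ) K) (-1) := by
    rw [map_pow, RatFunc.algebraMap_X, map_neg, map_one]; exact h2
  have h4 := RatFunc.algebraMap_injective ℚ h3
  have h5 := congrArg Polynomial.natDegree h4
  simp [Polynomial.natDegree_X_pow] at h5
  omega

/-- generic termwise computation for the "A" sum -/
lemma auxA {e b f : ℤ} {Q D1 D2 DK : K} (hQ : Q ≠ 0) (hD1 : D1 ≠ 0) (hD2 : D2 ≠ 0)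
    (hDK : DK = D2 * Q) (he : e + b = 2 + f) :
    v ^ e * v ^ b * (Q / DK) / D1 = v ^ (2:ℤ) * (v ^ f / (D1 * D2)) := by
  subst hDK
  have h1 : Q / (D2 * Q) = D2⁻¹ := by
    rw [mul_comm, div_mul_eq_div_div, div_self hQ, one_div]
  have h2 : v ^ e * v ^ b = v ^ (2:ℤ) * v ^ f := by
    rw [← zpow_add₀ v_ne_zero, ← zpow_add₀ v_ne_zero]
    exact vpow_congr he
  rw [h1, h2]
  simp only [div_eq_mul_inv, mul_inv]
  ring

/-- generic termwise computation for the "B" sum -/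
lemma auxB {e c g f : ℤ} {Q D1 D2 DK : K} (hQ : Q ≠ 0) (hD1 : D1 ≠ 0) (hD2 : D2 ≠ 0)
    (hDK : DK = D1 * Q) (he : e - c = g + f) :
    v ^ e * (v ^ c)⁻¹ * (Q / DK) / D2 = v ^ g * (v ^ f / (D2 * D1)) := by
  subst hDK
  have h1 : Q / (D1 * Q) = D1⁻¹ := by
    rw [mul_comm, div_mul_eq_div_div, div_self hQ, one_div]
  have h2 : v ^ e * (v ^ c)⁻¹ = v ^ g * v ^ f := by
    rw [← zpow_neg, ← zpow_add₀ v_ne_zero, ← zpow_add₀ v_ne_zero]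
    exact vpow_congr (by omega)
  rw [h1, h2]
  simp only [div_eq_mul_inv, mul_inv]
  ring

/-- The key recursion. -/
lemma key (p : ℕ) :
    qint (2 * ((p : ℤ) + 1)) * ∑ k ∈ Finset.range (p + 1 + 1),
      v ^ (-2 * (k : ℤ) * ((p : ℤ) + 1 - k) + 2 * ((p : ℤ) + 1 - k)) /
        (qdfact k * qdfact (p + 1 - k))
    = (v ^ (2:ℤ) + v ^ (-2 * (p : ℤ))) * ∑ k ∈ Finset.range (p + 1),
      v ^ (-2 * (k : ℤ) * ((p : ℤ) - k) + 2 * ((p : ℤ) - k)) /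
        (qdfact k * qdfact (p - k)) := by
  rw [Finset.mul_sum]
  have step1 : (∑ k ∈ Finset.range (p + 1 + 1),
      qint (2 * ((p : ℤ) + 1)) *
        (v ^ (-2 * (k : ℤ) * ((p : ℤ) + 1 - k) + 2 * ((p : ℤ) + 1 - k)) /
          (qdfact k * qdfact (p + 1 - k))))
      = ∑ k ∈ Finset.range (p + 1 + 1),
        (v ^ (-2 * (k : ℤ) * ((p : ℤ) + 1 - k) + 2 * ((p : ℤ) + 1 - k)) * v ^ (2 * (k : ℤ)) *
          (qint (2 * ((p : ℤ) + 1 - k)) / qdfact (p + 1 - k)) / qdfact k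
        + v ^ (-2 * (k : ℤ) * ((p : ℤ) + 1 - k) + 2 * ((p : ℤ) + 1 - k)) *
            (v ^ (2 * ((p : ℤ) + 1 - k)))⁻¹ *
            (qint (2 * (k : ℤ)) / qdfact k) / qdfact (p + 1 - k)) := by
    refine Finset.sum_congr rfl fun k _ => ?_
    have hsplit : qint (2 * ((p : ℤ) + 1))
        = v ^ (2 * (k : ℤ)) * qint (2 * ((p : ℤ) + 1 - k))
          + (v ^ (2 * ((p : ℤ) + 1 - k)))⁻¹ * qint (2 * (k : ℤ)) := by
      rw [← zpow_neg, ← qint_add]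
      exact congrArg qint (by ring)
    rw [hsplit]
    ring
  rw [step1, Finset.sum_add_distrib]
  have SA : (∑ k ∈ Finset.range (p + 1 + 1),
      v ^ (-2 * (k : ℤ) * ((p : ℤ) + 1 - k) + 2 * ((p : ℤ) + 1 - k)) * v ^ (2 * (k : ℤ)) *
        (qint (2 * ((p : ℤ) + 1 - k)) / qdfact (p + 1 - k)) / qdfact k)
      = v ^ (2:ℤ) * ∑ k ∈ Finset.range (p + 1),
          v ^ (-2 * (k : ℤ) * ((p : ℤ) - k) + 2 * ((p : ℤ) - k)) /
            (qdfact k * qdfact (p - k)) := by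
    rw [Finset.sum_range_succ]
    have hlast : qint (2 * ((p : ℤ) + 1 - ((p + 1 : ℕ) : ℤ))) = 0 := by
      rw [show 2 * ((p : ℤ) + 1 - ((p + 1 : ℕ) : ℤ)) = 0 from by omega]
      exact qint_zero
    rw [hlast, Finset.mul_sum]
    simp only [zero_div, mul_zero, zero_mul, add_zero]
    refine Finset.sum_congr rfl fun k hk => ?_
    have hk' : k ≤ p := by
      have := Finset.mem_range.mp hk; omega
    have hDK : qdfact (p + 1 - k) = qdfact (p - k) * qint (2 * ((p : ℤ) + 1 - k)) := by
      rw [show p + 1 - k = (p - k) + 1 from by omega, qdfact_succ]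
      congr 2
      omega
    exact auxA (qint_ne_zero (by omega)) (qdfact_ne_zero k) (qdfact_ne_zero (p - k)) hDK
      (by ring)
  have SB : (∑ k ∈ Finset.range (p + 1 + 1),
      v ^ (-2 * (k : ℤ) * ((p : ℤ) + 1 - k) + 2 * ((p : ℤ) + 1 - k)) *
        (v ^ (2 * ((p : ℤ) + 1 - k)))⁻¹ *
        (qint (2 * (k : ℤ)) / qdfact k) / qdfact (p + 1 - k))
      = v ^ (-2 * (p : ℤ)) * ∑ k ∈ Finset.range (p + 1),
          v ^ (-2 * (k : ℤ) * ((p : ℤ) - k) + 2 * ((p : ℤ) - k)) /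
            (qdfact k * qdfact (p - k)) := by
    rw [Finset.sum_range_succ']
    have h0 : qint (2 * ((0 : ℕ) : ℤ)) = 0 := by
      rw [show 2 * ((0 : ℕ) : ℤ) = 0 from by omega]
      exact qint_zero
    rw [h0]
    simp only [zero_div, mul_zero, zero_mul, add_zero, div_zero]
    conv_rhs => rw [Finset.mul_sum, ← Finset.sum_range_reflect]
    refine Finset.sum_congr rfl fun k hk => ?_
    have hk' : k ≤ p := by
      have := Finset.mem_range.mp hk; omega
    rw [show p + 1 - 1 - k = p - k from by omega,
      show p - (p - k) = k from by omega,
      show ((p - k : ℕ) : ℤ) = (p : ℤ) - k from by omega,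
      show p + 1 - (k + 1) = p - k from by omega]
    have hDK : qdfact (k + 1) = qdfact k * qint (2 * (((k + 1 : ℕ)) : ℤ)) := by
      rw [qdfact_succ]
      congr 2
      try omega
    exact auxB (qint_ne_zero (by omega)) (qdfact_ne_zero k) (qdfact_ne_zero (p - k)) hDK
      (by push_cast; ring)
  rw [SA, SB, ← add_mul]

theorem stmt1 (p : ℕ) :
    qfact p * ∑ k ∈ Finset.range (p + 1),
      v ^ (-2 * (k : ℤ) * ((p : ℤ) - k) + 2 * ((p : ℤ) - k)) /
        (qdfact k * qdfact (p - k))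
    = v ^ ((p : ℤ) * (3 - (p : ℤ)) / 2) := by
  induction p with
  | zero =>
    norm_num [qfact, qdfact]
  | succ p ih =>
    have hkey := key p
    push_cast
    obtain ⟨t, ht⟩ : ∃ t : ℤ, (p : ℤ) * (3 - (p : ℤ)) = 2 * t := by
      rcases Int.even_or_odd (p : ℤ) with ⟨a, ha⟩ | ⟨a, ha⟩
      · exact ⟨a * (3 - (p : ℤ)), by linear_combination (3 - (p : ℤ)) * ha⟩
      · exact ⟨(p : ℤ) * (1 - a), by linear_combination (-(p : ℤ)) * ha⟩
    have e1 : (p : ℤ) * (3 - (p : ℤ)) / 2 = t := by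
      rw [ht]; exact Int.mul_ediv_cancel_left t (by norm_num)
    rw [e1] at ih
    have e2 : ((p : ℤ) + 1) * (3 - ((p : ℤ) + 1)) / 2 = t + 1 - p := by
      rw [show ((p : ℤ) + 1) * (3 - ((p : ℤ) + 1)) = 2 * (t + 1 - (p : ℤ)) from by
        linear_combination ht]
      exact Int.mul_ediv_cancel_left _ (by norm_num)
    rw [e2]
    have hq2 : qint (2 * ((p : ℤ) + 1)) ≠ 0 := qint_ne_zero (by positivity)
    have hq1 : qint ((p : ℤ) + 1) ≠ 0 := qint_ne_zero (by positivity)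
    have hfact : qfact (p + 1) = qfact p * qint ((p : ℤ) + 1) := Finset.prod_range_succ _ _
    have hnum : v ^ (2:ℤ) + v ^ (-2 * (p : ℤ))
        = v ^ (1 - (p : ℤ)) * (v ^ ((p : ℤ) + 1) + v ^ (-((p : ℤ) + 1))) := by
      have q1 : 1 - (p : ℤ) + ((p : ℤ) + 1) = 2 := by ring
      have q2 : 1 - (p : ℤ) + (-((p : ℤ) + 1)) = -2 * (p : ℤ) := by ring
      rw [mul_add, ← zpow_add₀ v_ne_zero, ← zpow_add₀ v_ne_zero, q1, q2]
    apply mul_left_cancel₀ hq2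
    calc qint (2 * ((p : ℤ) + 1)) * (qfact (p + 1) * ∑ k ∈ Finset.range (p + 1 + 1),
          v ^ (-2 * (k : ℤ) * ((p : ℤ) + 1 - k) + 2 * ((p : ℤ) + 1 - k)) /
            (qdfact k * qdfact (p + 1 - k)))
        = qfact (p + 1) * (qint (2 * ((p : ℤ) + 1)) * ∑ k ∈ Finset.range (p + 1 + 1),
          v ^ (-2 * (k : ℤ) * ((p : ℤ) + 1 - k) + 2 * ((p : ℤ) + 1 - k)) /
            (qdfact k * qdfact (p + 1 - k))) := by ring
      _ = qfact (p + 1) * ((v ^ (2:ℤ) + v ^ (-2 * (p : ℤ))) * ∑ k ∈ Finset.range (p + 1),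
          v ^ (-2 * (k : ℤ) * ((p : ℤ) - k) + 2 * ((p : ℤ) - k)) /
            (qdfact k * qdfact (p - k))) := by rw [hkey]
      _ = (v ^ (1 - (p : ℤ)) * (v ^ ((p : ℤ) + 1) + v ^ (-((p : ℤ) + 1)))) *
            qint ((p : ℤ) + 1) * (qfact p * ∑ k ∈ Finset.range (p + 1),
          v ^ (-2 * (k : ℤ) * ((p : ℤ) - k) + 2 * ((p : ℤ) - k)) /
            (qdfact k * qdfact (p - k))) := by rw [hfact, ← hnum]; ring
      _ = (v ^ (1 - (p : ℤ)) * (v ^ ((p : ℤ) + 1) + v ^ (-((p : ℤ) + 1)))) *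
            qint ((p : ℤ) + 1) * v ^ t := by rw [ih]
      _ = (v ^ ((p : ℤ) + 1) + v ^ (-((p : ℤ) + 1))) * qint ((p : ℤ) + 1) *
            (v ^ (1 - (p : ℤ)) * v ^ t) := by ring
      _ = qint (2 * ((p : ℤ) + 1)) * v ^ (t + 1 - (p : ℤ)) := by
          rw [qint_double, ← zpow_add₀ v_ne_zero,
            vpow_congr (show 1 - (p : ℤ) + t = t + 1 - (p : ℤ) from by ring)]
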